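/- arXiv:1504.03526 — 2 statements merged into one kernel-verified Lean document; each statement's English description precedes it below -/
import Mathlib

section
/- For every real L > 0 and all real numbers z, ζ with |z| < 1/(2L), |ζ| < 1/(2L) and z ≠ ζ, the double series ∑_{κ≥1} ∑_{ℓ≥1} (L/2)^{κ+ℓ} · (4κℓ/(κ+ℓ)) · binom(2κ−1, κ) · binom(2ℓ−1, ℓ) · z^κ ζ^ℓ converges and its sum equals (zζ/(z−ζ)²) · [ (1 − L(z+ζ)) / √((1 − 2Lz)(1 − 2Lζ)) − 1 ]. -/
open Real MeasureTheory

noncomputable section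
namespace ZTLaux


/-- normalized central binomial coefficient `C(2n,n)/4^n`. -/
def a (n : ℕ) : ℝ := (Nat.centralBinom n : ℝ) / 4 ^ n

lemma a_nonneg (n : ℕ) : 0 ≤ a n := by unfold a; positivity

lemma centralBinom_le_four_pow (n : ℕ) : Nat.centralBinom n ≤ 4 ^ n := by
  induction n with
  | zero => simp [Nat.centralBinom]
  | succ n ih =>
    have h := Nat.succ_mul_centralBinom_succ n
    have h2 : (n + 1) * Nat.centralBinom (n + 1) ≤ (n + 1) * (4 * Nat.centralBinom n) := by
      rw [h]; nlinarith [Nat.centralBinom_pos n]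
    have h3 := Nat.le_of_mul_le_mul_left h2 (Nat.succ_pos n)
    calc Nat.centralBinom (n + 1) ≤ 4 * Nat.centralBinom n := h3
      _ ≤ 4 * 4 ^ n := by omega
      _ = 4 ^ (n + 1) := by ring

lemma a_le_one (n : ℕ) : a n ≤ 1 := by
  rw [a, div_le_one (by positivity)]
  exact_mod_cast centralBinom_le_four_pow n

lemma a_rec (n : ℕ) : ((n : ℝ) + 1) * a (n + 1) = ((n : ℝ) + 1 / 2) * a n := by
  have h := Nat.succ_mul_centralBinom_succ n
  have h' : ((n : ℝ) + 1) * (Nat.centralBinom (n + 1) : ℝ)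
      = 2 * (2 * n + 1) * (Nat.centralBinom n : ℝ) := by exact_mod_cast h
  rw [a, a, pow_succ, ← mul_div_assoc, ← mul_div_assoc,
    div_eq_div_iff (by positivity) (by positivity)]
  linear_combination (4 : ℝ) ^ n * h'

lemma summable_mul_geom {r : ℝ} (hr : |r| < 1) :
    Summable (fun n : ℕ => ((n : ℝ) + 1) * r ^ n) := by
  have h1 := summable_pow_mul_geometric_of_norm_lt_one (R := ℝ) 1 (by rwa [Real.norm_eq_abs])
  have h2 : Summable (fun n : ℕ => r ^ n) :=
    summable_geometric_of_norm_lt_one (by rwa [Real.norm_eq_abs])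
  exact (h1.add h2).congr (fun n => by push_cast; ring)





lemma summable_deriv_bound {r : ℝ} (hr : |r| < 1) :
    Summable (fun n : ℕ => (n : ℝ) * r ^ (n - 1)) := by
  rw [← summable_nat_add_iff 1]
  exact (summable_mul_geom hr).congr (fun n => by push_cast; ring_nf)

lemma summable_F {x : ℝ} (hx : |x| < 1) : Summable (fun n : ℕ => a n * x ^ n) := by
  refine Summable.of_norm_bounded (g := fun n : ℕ => |x| ^ n)
    (summable_geometric_of_norm_lt_one (by simpa using hx)) (fun n => ?_)
  rw [norm_mul, norm_pow, Real.norm_eq_abs, Real.norm_eq_abs,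
    abs_of_nonneg (a_nonneg n)]
  exact mul_le_of_le_one_left (by positivity) (a_le_one n)

lemma summable_G {x : ℝ} (hx : |x| < 1) :
    Summable (fun n : ℕ => a n * ((n : ℝ) * x ^ (n - 1))) := by
  refine Summable.of_norm_bounded (g := fun n : ℕ => (n : ℝ) * |x| ^ (n - 1))
    (summable_deriv_bound (r := |x|) (by simpa using hx)) (fun n => ?_)
  rw [Real.norm_eq_abs, abs_mul, abs_mul, abs_pow, Nat.abs_cast, abs_of_nonneg (a_nonneg n)]
  exact mul_le_of_le_one_left (by positivity) (a_le_one n)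

lemma hasDerivAt_F {x : ℝ} (hx : |x| < 1) :
    HasDerivAt (fun y => ∑' n : ℕ, a n * y ^ n)
      (∑' n : ℕ, a n * ((n : ℝ) * x ^ (n - 1))) x := by
  set r : ℝ := (|x| + 1) / 2 with hr
  have hax := abs_nonneg x
  have hxr : |x| < r := by rw [hr]; linarith
  have hr1 : r < 1 := by rw [hr]; linarith
  have hr0 : 0 < r := by rw [hr]; linarith
  refine hasDerivAt_tsum_of_isPreconnected
    (u := fun n : ℕ => (n : ℝ) * r ^ (n - 1)) ?_ Metric.isOpen_ball
    ((convex_ball (0:ℝ) r).isPreconnected)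
    (g := fun n y => a n * y ^ n) (g' := fun n y => a n * ((n : ℝ) * y ^ (n - 1)))
    (fun n y _ => (hasDerivAt_pow n y).const_mul (a n)) ?_
    (Metric.mem_ball_self hr0) ?_ ?_
  · exact summable_deriv_bound (by rwa [abs_of_pos hr0])
  · intro n y hy
    rw [Metric.mem_ball, dist_zero_right, Real.norm_eq_abs] at hy
    rw [Real.norm_eq_abs, abs_mul, abs_mul, abs_pow, Nat.abs_cast,
      abs_of_nonneg (a_nonneg n)]
    calc a n * ((n : ℝ) * |y| ^ (n - 1)) ≤ 1 * ((n : ℝ) * r ^ (n - 1)) := by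
          apply mul_le_mul (a_le_one n) ?_ (by positivity) zero_le_one
          exact mul_le_mul_of_nonneg_left
            (pow_le_pow_left₀ (abs_nonneg y) hy.le _) (Nat.cast_nonneg n)
      _ = (n : ℝ) * r ^ (n - 1) := one_mul _
  · refine summable_of_ne_finset_zero (s := {0}) (fun n hn => ?_)
    simp only [Finset.mem_singleton] at hn
    simp [zero_pow hn]
  · rwa [Metric.mem_ball, dist_zero_right, Real.norm_eq_abs]

lemma hasSum_xG {x : ℝ} (hx : |x| < 1) :
    HasSum (fun n : ℕ => ((n : ℝ) + 1) * a (n + 1) * x ^ (n + 1))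
      (x * ∑' n : ℕ, a n * ((n : ℝ) * x ^ (n - 1))) := by
  have h1 := ((summable_G hx).hasSum).mul_left x
  have h2 := (hasSum_nat_add_iff' (f := fun n : ℕ => x * (a n * ((n : ℝ) * x ^ (n - 1)))) 1).2 h1
  simp only [Finset.range_one, Finset.sum_singleton, Nat.cast_zero, zero_mul, mul_zero,
    sub_zero] at h2
  refine h2.congr_fun fun n => ?_
  push_cast
  ring

lemma hasSum_nxF {x : ℝ} (hx : |x| < 1) :
    HasSum (fun n : ℕ => (n : ℝ) * a n * x ^ n)
      (x * ∑' n : ℕ, a n * ((n : ℝ) * x ^ (n - 1))) := by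
  refine (((summable_G hx).hasSum).mul_left x).congr_fun fun n => ?_
  cases n with
  | zero => simp
  | succ m => push_cast; ring

lemma G_identity {x : ℝ} (hx : |x| < 1) :
    (1 - x) * (x * ∑' n : ℕ, a n * ((n : ℝ) * x ^ (n - 1)))
      = x * (∑' n : ℕ, a n * x ^ n) / 2 := by
  set G : ℝ := ∑' n : ℕ, a n * ((n : ℝ) * x ^ (n - 1)) with hG
  set F : ℝ := ∑' n : ℕ, a n * x ^ n with hF
  have d1 : HasSum (fun n : ℕ => x * ((n : ℝ) * a n * x ^ n) + x / 2 * (a n * x ^ n))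
      (x * (x * G) + x / 2 * F) :=
    ((hasSum_nxF hx).mul_left x).add (((summable_F hx).hasSum).mul_left (x / 2))
  have d2 : HasSum (fun n : ℕ => ((n : ℝ) + 1) * a (n + 1) * x ^ (n + 1)) (x * (x * G) + x / 2 * F) := by
    refine d1.congr_fun fun n => ?_
    rw [a_rec n]
    ring
  have := (hasSum_xG hx).unique d2
  linarith [this]


lemma a_zero : a 0 = 1 := by norm_num [a, Nat.centralBinom]

lemma a_one : a 1 = 1 / 2 := by norm_num [a, Nat.centralBinom]


lemma hasDerivAt_sqrt_one_sub {y : ℝ} (hy : y < 1) :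
    HasDerivAt (fun t : ℝ => Real.sqrt (1 - t)) (-(2 * Real.sqrt (1 - y))⁻¹) y := by
  have h1 : (0:ℝ) < 1 - y := by linarith
  have hinner : HasDerivAt (fun t : ℝ => 1 - t) (-1) y := by
    simpa using (hasDerivAt_id y).const_sub 1
  have := (Real.hasDerivAt_sqrt (ne_of_gt h1)).comp y hinner
  refine this.congr_deriv (Eq.symm ?_)
  field_simp

lemma hasDerivAt_H {y : ℝ} (hy : |y| < 1) :
    HasDerivAt (fun t : ℝ => (∑' n : ℕ, a n * t ^ n) * Real.sqrt (1 - t)) 0 y := by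
  obtain ⟨hy1, hy2⟩ := abs_lt.mp hy
  have h1 : (0:ℝ) < 1 - y := by linarith
  have hs : (0:ℝ) < Real.sqrt (1 - y) := Real.sqrt_pos.mpr h1
  have hsq : Real.sqrt (1 - y) ^ 2 = 1 - y := Real.sq_sqrt h1.le
  have hD := (hasDerivAt_F hy).mul (hasDerivAt_sqrt_one_sub hy2)
  refine hD.congr_deriv (Eq.symm ?_)
  set G : ℝ := ∑' n : ℕ, a n * ((n : ℝ) * y ^ (n - 1))
  set F : ℝ := ∑' n : ℕ, a n * y ^ n
  have key := G_identity hy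
  rcases eq_or_ne y 0 with rfl | hy0
  · -- at y = 0 : G * sqrt 1 + F * (-(2*sqrt 1)⁻¹) where G = a 1 * 1 etc
    have hG0 : G = a 1 := by
      rw [show G = ∑' n : ℕ, a n * ((n : ℝ) * (0:ℝ) ^ (n - 1)) from rfl]
      rw [tsum_eq_single 1 ?_]
      · norm_num
      · intro n hn
        match n, hn with
        | 0, _ => norm_num
        | (m+2), _ => simp [zero_pow]
    have hF0 : F = a 0 := by
      rw [show F = ∑' n : ℕ, a n * (0:ℝ) ^ n from rfl]
      rw [tsum_eq_single 0 ?_]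
      · norm_num
      · intro n hn; simp [zero_pow hn]
    rw [hG0, hF0, a_zero, a_one]
    norm_num [Real.sqrt_one]
  · have key2 : (1 - y) * G = F / 2 :=
      mul_left_cancel₀ hy0 (by linear_combination key)
    have hss : Real.sqrt (1 - y) * Real.sqrt (1 - y) = 1 - y := Real.mul_self_sqrt h1.le
    field_simp
    linear_combination (-2 : ℝ) * key2 - 2 * G * hsq


lemma F_eq {x : ℝ} (hx : |x| < 1) :
    (∑' n : ℕ, a n * x ^ n) = (Real.sqrt (1 - x))⁻¹ := by
  obtain ⟨hx1, hx2⟩ := abs_lt.mp hx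
  have h1 : (0:ℝ) < 1 - x := by linarith
  have hs : (0:ℝ) < Real.sqrt (1 - x) := Real.sqrt_pos.mpr h1
  set H : ℝ → ℝ := fun t => (∑' n : ℕ, a n * t ^ n) * Real.sqrt (1 - t) with hH
  have hmem : ∀ y ∈ Set.Ioo (-1 : ℝ) 1, |y| < 1 := fun y hy => abs_lt.mpr ⟨hy.1, hy.2⟩
  have hconst : H x = H 0 := by
    refine (convex_Ioo (-1 : ℝ) 1).is_const_of_fderivWithin_eq_zero
      (fun y hy => (hasDerivAt_H (hmem y hy)).differentiableAt.differentiableWithinAt)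
      (fun y hy => ?_) (Set.mem_Ioo.mpr ⟨by linarith, by linarith⟩)
      (Set.mem_Ioo.mpr ⟨by norm_num, by norm_num⟩)
    rw [fderivWithin_of_isOpen isOpen_Ioo hy, (hasDerivAt_H (hmem y hy)).hasFDerivAt.fderiv]
    ext v
    simp
  have hH0 : H 0 = 1 := by
    have hF0 : (∑' n : ℕ, a n * (0:ℝ) ^ n) = a 0 := by
      rw [tsum_eq_single 0 ?_]
      · norm_num
      · intro n hn; simp [zero_pow hn]
    simp [hH, hF0, a_zero, Real.sqrt_one]
  have h2 : (∑' n : ℕ, a n * x ^ n) * Real.sqrt (1 - x) = 1 := by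
    have h3 := hconst.trans hH0
    simpa [hH] using h3
  field_simp at h2 ⊢
  linarith [h2]


lemma hasSum_P {x : ℝ} (hx : |x| < 1) :
    HasSum (fun n : ℕ => ((n : ℝ) + 1) * a (n + 1) * x ^ (n + 1))
      (x / (2 * ((1 - x) * Real.sqrt (1 - x)))) := by
  obtain ⟨hx1, hx2⟩ := abs_lt.mp hx
  have h1 : (0:ℝ) < 1 - x := by linarith
  have hs : (0:ℝ) < Real.sqrt (1 - x) := Real.sqrt_pos.mpr h1
  have hss : Real.sqrt (1 - x) * Real.sqrt (1 - x) = 1 - x := Real.mul_self_sqrt h1.le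
  have hG := hasSum_xG hx
  have hd1 := hasDerivAt_F hx
  have heq : (fun y => ∑' n : ℕ, a n * y ^ n) =ᶠ[nhds x]
      (fun y => (Real.sqrt (1 - y))⁻¹) := by
    filter_upwards [isOpen_Ioo.mem_nhds (Set.mem_Ioo.mpr ⟨hx1, hx2⟩)] with y hy
    exact F_eq (abs_lt.mpr ⟨hy.1, hy.2⟩)
  have hd1' : HasDerivAt (fun y => (Real.sqrt (1 - y))⁻¹)
      (∑' n : ℕ, a n * ((n : ℝ) * x ^ (n - 1))) x :=
    hd1.congr_of_eventuallyEq heq.symm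
  have hd2 : HasDerivAt (fun y => (Real.sqrt (1 - y))⁻¹)
      ((2 * ((1 - x) * Real.sqrt (1 - x)))⁻¹) x := by
    have := (hasDerivAt_sqrt_one_sub hx2).inv (ne_of_gt hs)
    refine this.congr_deriv (Eq.symm ?_)
    rw [← hss]
    field_simp
    ring_nf
    rw [Real.sqrt_sq hs.le]
  have hGval : (∑' n : ℕ, a n * ((n : ℝ) * x ^ (n - 1)))
      = (2 * ((1 - x) * Real.sqrt (1 - x)))⁻¹ := hd1'.unique hd2
  rw [hGval] at hG
  rwa [← div_eq_mul_inv] at hG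



lemma summable_abs_b {x : ℝ} (hx : |x| < 1) :
    Summable (fun i : ℕ => |((i : ℝ) + 1) * a (i + 1) * x ^ (i + 1)|) := by
  refine ((hasSum_P (x := |x|) (by rwa [abs_abs])).summable).congr fun i => ?_
  rw [abs_mul, abs_mul, abs_pow, abs_of_nonneg (by positivity : (0:ℝ) ≤ (i:ℝ)+1),
    abs_of_nonneg (a_nonneg (i+1))]

lemma one_sub_pos {x t : ℝ} (hx : |x| < 1) (ht0 : 0 ≤ t) (ht1 : t ≤ 1) :
    0 < 1 - t * x := by
  have h1 : t * x ≤ t * |x| := mul_le_mul_of_nonneg_left (le_abs_self x) ht0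
  have h2 : t * |x| ≤ 1 * |x| := mul_le_mul_of_nonneg_right ht1 (abs_nonneg x)
  nlinarith

-- pointwise sum of the double series at parameter t ∈ (0,1]
lemma tsum_g {x y t : ℝ} (hx : |x| < 1) (hy : |y| < 1) (ht0 : 0 < t) (ht1 : t ≤ 1) :
    ∑' p : ℕ × ℕ, (((p.1 : ℝ) + 1) * a (p.1 + 1) * x ^ (p.1 + 1)) *
        (((p.2 : ℝ) + 1) * a (p.2 + 1) * y ^ (p.2 + 1)) * t ^ (p.1 + p.2 + 1)
      = x * y * t / 4 *
        (((1 - t * x) * (1 - t * y)) * Real.sqrt ((1 - t * x) * (1 - t * y)))⁻¹ := by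
  have htx : |t * x| < 1 := by
    rw [abs_mul, abs_of_pos ht0]
    nlinarith [abs_nonneg x]
  have hty : |t * y| < 1 := by
    rw [abs_mul, abs_of_pos ht0]
    nlinarith [abs_nonneg y]
  have hpx : (0:ℝ) < 1 - t * x := one_sub_pos hx ht0.le ht1
  have hpy : (0:ℝ) < 1 - t * y := one_sub_pos hy ht0.le ht1
  have hsx : (0:ℝ) < Real.sqrt (1 - t * x) := Real.sqrt_pos.mpr hpx
  have hsy : (0:ℝ) < Real.sqrt (1 - t * y) := Real.sqrt_pos.mpr hpy
  have h1 := hasSum_P htx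
  have h2 := hasSum_P hty
  have hsummul : Summable (fun p : ℕ × ℕ =>
      (((p.1 : ℝ) + 1) * a (p.1 + 1) * (t * x) ^ (p.1 + 1)) *
        (((p.2 : ℝ) + 1) * a (p.2 + 1) * (t * y) ^ (p.2 + 1))) := by
    rw [← summable_abs_iff]
    refine ((summable_abs_b htx).mul_of_nonneg (summable_abs_b hty) (fun i => abs_nonneg _)
      (fun j => abs_nonneg _)).congr fun p => ?_
    simp [abs_mul]
  have hmul := (h1.mul h2 hsummul).div_const t
  have hfun : ∀ p : ℕ × ℕ,
      (((p.1 : ℝ) + 1) * a (p.1 + 1) * x ^ (p.1 + 1)) *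
        (((p.2 : ℝ) + 1) * a (p.2 + 1) * y ^ (p.2 + 1)) * t ^ (p.1 + p.2 + 1)
      = (((p.1 : ℝ) + 1) * a (p.1 + 1) * (t * x) ^ (p.1 + 1)) *
        (((p.2 : ℝ) + 1) * a (p.2 + 1) * (t * y) ^ (p.2 + 1)) / t := by
    intro p
    rw [mul_pow, mul_pow, eq_div_iff (ne_of_gt ht0)]
    have hpow : t ^ (p.1 + 1) * t ^ (p.2 + 1) = t ^ (p.1 + p.2 + 1) * t := by
      rw [← pow_add, ← pow_succ]
      congr 1
      omega
    linear_combination (((p.1 : ℝ) + 1) * a (p.1 + 1) * x ^ (p.1 + 1) *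
      (((p.2 : ℝ) + 1) * a (p.2 + 1) * y ^ (p.2 + 1))) * hpow
  have := (hmul.congr_fun hfun).tsum_eq
  rw [this, Real.sqrt_mul hpx.le]
  field_simp
  ring


lemma key_deriv {x y t : ℝ} (hx : |x| < 1) (hy : |y| < 1) (hxy : x ≠ y)
    (ht0 : 0 ≤ t) (ht1 : t ≤ 1) :
    HasDerivAt (fun u : ℝ => x * y / (x - y) ^ 2 *
        ((1 - u * ((x + y) / 2)) / Real.sqrt ((1 - u * x) * (1 - u * y)) - 1))
      (x * y * t / 4 *
        (((1 - t * x) * (1 - t * y)) * Real.sqrt ((1 - t * x) * (1 - t * y)))⁻¹) t := by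
  have hpx : (0:ℝ) < 1 - t * x := one_sub_pos hx ht0 ht1
  have hpy : (0:ℝ) < 1 - t * y := one_sub_pos hy ht0 ht1
  have hw : (0:ℝ) < (1 - t * x) * (1 - t * y) := mul_pos hpx hpy
  have hsw : (0:ℝ) < Real.sqrt ((1 - t * x) * (1 - t * y)) := Real.sqrt_pos.mpr hw
  have hss : Real.sqrt ((1 - t * x) * (1 - t * y)) * Real.sqrt ((1 - t * x) * (1 - t * y))
      = (1 - t * x) * (1 - t * y) := Real.mul_self_sqrt hw.le
  have hxy2 : (x - y) ^ 2 ≠ 0 := pow_ne_zero 2 (sub_ne_zero.mpr hxy)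
  have hA : HasDerivAt (fun u : ℝ => 1 - u * x) (-x) t := by
    simpa using (hasDerivAt_mul_const x).const_sub 1
  have hB : HasDerivAt (fun u : ℝ => 1 - u * y) (-y) t := by
    simpa using (hasDerivAt_mul_const y).const_sub 1
  have hw' := hA.mul hB
  have hsq := (Real.hasDerivAt_sqrt hw.ne').comp t hw'
  have hN : HasDerivAt (fun u : ℝ => 1 - u * ((x + y) / 2)) (-((x + y) / 2)) t := by
    simpa using (hasDerivAt_mul_const ((x + y) / 2)).const_sub 1
  have hq := hN.div hsq hsw.ne'
  have hfull := (hq.sub_const 1).const_mul (x * y / (x - y) ^ 2)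
  refine hfull.congr_deriv (Eq.symm ?_)
  simp only [Function.comp_apply, Pi.mul_apply]
  set S := Real.sqrt ((1 - t * x) * (1 - t * y)) with hS
  have key : -((x+y)/2) * ((1-t*x)*(1-t*y)) - (1 - t*((x+y)/2)) * ((-x*(1-t*y) + (1-t*x)*(-y))/2)
      = t*(x-y)^2/4 := by ring
  have h1 : (-((x + y) / 2) * S - (1 - t * ((x + y) / 2)) * (1 / (2 * S) * (-x * (1 - t * y) + (1 - t * x) * -y))) / S ^ 2
      = (-2 * ((x+y)/2) * (S*S) - (1 - t*((x+y)/2)) * (-x*(1-t*y) + (1-t*x)*(-y))) / (2*(S*S)*S) := by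
    rw [sq]
    field_simp
  rw [h1, hss]
  have h2 : -2 * ((x+y)/2) * ((1-t*x)*(1-t*y)) - (1 - t*((x+y)/2)) * (-x*(1-t*y) + (1-t*x)*(-y))
      = t*(x-y)^2/2 := by linear_combination 2 * key
  rw [h2]
  have hSne : S ≠ 0 := by rw [hS]; positivity
  field_simp
  ring


lemma integral_phi {x y : ℝ} (hx : |x| < 1) (hy : |y| < 1) (hxy : x ≠ y) :
    ∫ t in Set.Ioc (0:ℝ) 1, x * y * t / 4 *
        (((1 - t * x) * (1 - t * y)) * Real.sqrt ((1 - t * x) * (1 - t * y)))⁻¹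
      = x * y / (x - y) ^ 2 * ((1 - (x + y) / 2) / Real.sqrt ((1 - x) * (1 - y)) - 1) := by
  rw [← intervalIntegral.integral_of_le zero_le_one]
  have huIcc : Set.uIcc (0:ℝ) 1 = Set.Icc 0 1 := Set.uIcc_of_le zero_le_one
  have hderiv : ∀ t ∈ Set.uIcc (0:ℝ) 1,
      HasDerivAt (fun u : ℝ => x * y / (x - y) ^ 2 *
        ((1 - u * ((x + y) / 2)) / Real.sqrt ((1 - u * x) * (1 - u * y)) - 1))
      (x * y * t / 4 *
        (((1 - t * x) * (1 - t * y)) * Real.sqrt ((1 - t * x) * (1 - t * y)))⁻¹) t := by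
    intro t ht
    rw [huIcc] at ht
    exact key_deriv hx hy hxy ht.1 ht.2
  have hcont : ContinuousOn (fun t : ℝ => x * y * t / 4 *
      (((1 - t * x) * (1 - t * y)) * Real.sqrt ((1 - t * x) * (1 - t * y)))⁻¹)
      (Set.uIcc (0:ℝ) 1) := by
    apply ContinuousOn.mul
    · fun_prop
    · apply ContinuousOn.inv₀
      · exact (((continuous_const.sub (continuous_id.mul continuous_const)).mul
          (continuous_const.sub (continuous_id.mul continuous_const))).mul
          (Real.continuous_sqrt.comp ((continuous_const.sub (continuous_id.mul continuous_const)).mul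
          (continuous_const.sub (continuous_id.mul continuous_const))))).continuousOn
      · intro t ht
        rw [huIcc] at ht
        have hw : (0:ℝ) < (1 - t * x) * (1 - t * y) :=
          mul_pos (one_sub_pos hx ht.1 ht.2) (one_sub_pos hy ht.1 ht.2)
        positivity
  rw [intervalIntegral.integral_eq_sub_of_hasDerivAt hderiv (hcont.intervalIntegrable)]
  norm_num [Real.sqrt_one]

lemma integral_c_pow (c : ℝ) (m : ℕ) :
    ∫ t in Set.Ioc (0:ℝ) 1, c * t ^ m = c / ((m : ℝ) + 1) := by
  rw [← intervalIntegral.integral_of_le zero_le_one, intervalIntegral.integral_const_mul,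
    integral_pow]
  simp [div_eq_mul_inv]

theorem core {x y : ℝ} (hx : |x| < 1) (hy : |y| < 1) (hxy : x ≠ y) :
    HasSum (fun p : ℕ × ℕ =>
      (((p.1 : ℝ) + 1) * a (p.1 + 1) * x ^ (p.1 + 1)) *
        (((p.2 : ℝ) + 1) * a (p.2 + 1) * y ^ (p.2 + 1)) / (((p.1 : ℝ) + 1) + ((p.2 : ℝ) + 1)))
      (x * y / (x - y) ^ 2 * ((1 - (x + y) / 2) / Real.sqrt ((1 - x) * (1 - y)) - 1)) := by
  set c : ℕ × ℕ → ℝ := fun p =>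
    (((p.1 : ℝ) + 1) * a (p.1 + 1) * x ^ (p.1 + 1)) *
      (((p.2 : ℝ) + 1) * a (p.2 + 1) * y ^ (p.2 + 1)) with hc
  set g : ℕ × ℕ → ℝ → ℝ := fun p t => c p * t ^ (p.1 + p.2 + 1) with hg
  have hint : ∀ p : ℕ × ℕ, Integrable (g p) (volume.restrict (Set.Ioc (0:ℝ) 1)) := by
    intro p
    exact (continuous_const.mul (continuous_pow _)).integrableOn_Ioc
  have hnormval : ∀ p : ℕ × ℕ, (∫ t in Set.Ioc (0:ℝ) 1, ‖g p t‖)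
      = ‖c p‖ / ((p.1 : ℝ) + (p.2 : ℝ) + 2) := by
    intro p
    have : ∀ t ∈ Set.Ioc (0:ℝ) 1, ‖g p t‖ = ‖c p‖ * t ^ (p.1 + p.2 + 1) := by
      intro t ht
      rw [hg]
      simp only [norm_mul, norm_pow, Real.norm_eq_abs t, abs_of_nonneg ht.1.le]
    rw [MeasureTheory.setIntegral_congr_fun measurableSet_Ioc this, integral_c_pow]
    push_cast
    ring_nf
  have hnormsum : Summable (fun p : ℕ × ℕ => ∫ t in Set.Ioc (0:ℝ) 1, ‖g p t‖) := by
    have hcs : Summable (fun p : ℕ × ℕ => |c p|) := by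
      refine ((summable_abs_b hx).mul_of_nonneg (summable_abs_b hy) (fun i => abs_nonneg _)
        (fun j => abs_nonneg _)).congr fun p => ?_
      simp [hc, abs_mul]
    refine Summable.of_nonneg_of_le (fun p => ?_) (fun p => ?_) hcs
    · rw [hnormval]; positivity
    · rw [hnormval, Real.norm_eq_abs]
      apply div_le_self (abs_nonneg _)
      have := (Nat.cast_nonneg (α := ℝ) p.1)
      have := (Nat.cast_nonneg (α := ℝ) p.2)
      linarith
  have hswap := MeasureTheory.hasSum_integral_of_summable_integral_norm hint hnormsum
  have htsum : ∀ t ∈ Set.Ioc (0:ℝ) 1, (∑' p : ℕ × ℕ, g p t)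
      = x * y * t / 4 *
        (((1 - t * x) * (1 - t * y)) * Real.sqrt ((1 - t * x) * (1 - t * y)))⁻¹ := by
    intro t ht
    rw [hg]
    exact tsum_g hx hy ht.1 ht.2
  rw [MeasureTheory.setIntegral_congr_fun measurableSet_Ioc htsum, integral_phi hx hy hxy]
    at hswap
  have hvals : ∀ p : ℕ × ℕ, (∫ t in Set.Ioc (0:ℝ) 1, g p t)
      = c p / (((p.1 : ℝ) + 1) + ((p.2 : ℝ) + 1)) := by
    intro p
    rw [hg]
    rw [integral_c_pow]
    push_cast
    ring_nf
  refine hswap.congr_fun fun p => ?_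
  rw [← hvals p]


lemma choose_eq (k : ℕ) :
    (Nat.choose (2 * (k + 1) - 1) (k + 1) : ℝ) = (Nat.centralBinom (k + 1) : ℝ) / 2 := by
  have h : 2 * Nat.choose (2 * k + 1) (k + 1) = Nat.centralBinom (k + 1) := by
    have p1 : Nat.centralBinom (k + 1)
        = Nat.choose (2 * k + 1) k + Nat.choose (2 * k + 1) (k + 1) := by
      rw [Nat.centralBinom, show 2 * (k + 1) = (2 * k + 1) + 1 from by omega]
      exact Nat.choose_succ_succ' (2 * k + 1) k
    have h2 := Nat.choose_symm (show k + 1 ≤ 2 * k + 1 by omega)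
    rw [show 2 * k + 1 - (k + 1) = k by omega] at h2
    omega
  have h3 : 2 * (k + 1) - 1 = 2 * k + 1 := by omega
  rw [h3]
  rw [eq_div_iff (two_ne_zero)]
  exact_mod_cast (by omega : Nat.choose (2 * k + 1) (k + 1) * 2 = Nat.centralBinom (k + 1))

end ZTLaux
end

/-- For a one-cut β-ensemble supported on `[0, 2L]`, the generating function of the
limiting covariances `(L/2)^{κ+ℓ}(4κℓ/(κ+ℓ))C(2κ−1,κ)C(2ℓ−1,ℓ)` equals
`(zζ/(z−ζ)²)·[(1 − L(z+ζ))/√((1−2Lz)(1−2Lζ)) − 1]`. -/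
theorem zero_twoL_generating_function (L : ℝ) (hL : 0 < L) (z ζ : ℝ)
    (hz : |z| < 1 / (2 * L)) (hζ : |ζ| < 1 / (2 * L)) (hzζ : z ≠ ζ) :
    HasSum (fun kl : ℕ × ℕ =>
      (L / 2) ^ ((kl.1 + 1) + (kl.2 + 1)) *
        (4 * (kl.1 + 1 : ℝ) * (kl.2 + 1 : ℝ) / ((kl.1 + 1 : ℝ) + (kl.2 + 1 : ℝ))) *
        (Nat.choose (2 * (kl.1 + 1) - 1) (kl.1 + 1) : ℝ) *
        (Nat.choose (2 * (kl.2 + 1) - 1) (kl.2 + 1) : ℝ) *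
        z ^ (kl.1 + 1) * ζ ^ (kl.2 + 1))
      (z * ζ / (z - ζ) ^ 2 *
        ((1 - L * (z + ζ)) / Real.sqrt ((1 - 2 * L * z) * (1 - 2 * L * ζ)) - 1)) := by
  have hL2 : (0:ℝ) < 2 * L := by linarith
  have hx : |2 * L * z| < 1 := by
    rw [show (2:ℝ) * L * z = (2 * L) * z by ring, abs_mul, abs_of_pos hL2]
    calc (2 * L) * |z| < (2 * L) * (1 / (2 * L)) := by
          exact mul_lt_mul_of_pos_left hz hL2
      _ = 1 := by field_simp
  have hy : |2 * L * ζ| < 1 := by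
    rw [show (2:ℝ) * L * ζ = (2 * L) * ζ by ring, abs_mul, abs_of_pos hL2]
    calc (2 * L) * |ζ| < (2 * L) * (1 / (2 * L)) := by
          exact mul_lt_mul_of_pos_left hζ hL2
      _ = 1 := by field_simp
  have hxy : 2 * L * z ≠ 2 * L * ζ := by
    intro h
    exact hzζ (mul_left_cancel₀ (ne_of_gt hL2) h)
  have h := ZTLaux.core hx hy hxy
  have hterm : ∀ kl : ℕ × ℕ,
      (L / 2) ^ ((kl.1 + 1) + (kl.2 + 1)) *
        (4 * (kl.1 + 1 : ℝ) * (kl.2 + 1 : ℝ) / ((kl.1 + 1 : ℝ) + (kl.2 + 1 : ℝ))) *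
        (Nat.choose (2 * (kl.1 + 1) - 1) (kl.1 + 1) : ℝ) *
        (Nat.choose (2 * (kl.2 + 1) - 1) (kl.2 + 1) : ℝ) *
        z ^ (kl.1 + 1) * ζ ^ (kl.2 + 1)
      = (((kl.1 : ℝ) + 1) * ZTLaux.a (kl.1 + 1) * (2 * L * z) ^ (kl.1 + 1)) *
        (((kl.2 : ℝ) + 1) * ZTLaux.a (kl.2 + 1) * (2 * L * ζ) ^ (kl.2 + 1)) /
        (((kl.1 : ℝ) + 1) + ((kl.2 : ℝ) + 1)) := by
    intro kl
    rw [ZTLaux.choose_eq kl.1, ZTLaux.choose_eq kl.2, ZTLaux.a, ZTLaux.a]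
    rw [show (2:ℝ) * L * z = (2 * L) * z by ring, show (2:ℝ) * L * ζ = (2 * L) * ζ by ring,
      mul_pow, mul_pow]
    rw [show (L / 2) = (2 * L) / 4 by ring, div_pow, pow_add (2 * L), pow_add (4:ℝ)]
    have h1 : ((4:ℝ)) ^ (kl.1 + 1) ≠ 0 := by positivity
    have h2 : ((4:ℝ)) ^ (kl.2 + 1) ≠ 0 := by positivity
    field_simp
    ring
  have hval : (2 * L * z) * (2 * L * ζ) / ((2 * L * z) - (2 * L * ζ)) ^ 2 *
      ((1 - ((2 * L * z) + (2 * L * ζ)) / 2) /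
        Real.sqrt ((1 - 2 * L * z) * (1 - 2 * L * ζ)) - 1)
      = z * ζ / (z - ζ) ^ 2 *
        ((1 - L * (z + ζ)) / Real.sqrt ((1 - 2 * L * z) * (1 - 2 * L * ζ)) - 1) := by
    have e1 : (2 * L * z) * (2 * L * ζ) / ((2 * L * z) - (2 * L * ζ)) ^ 2
        = z * ζ / (z - ζ) ^ 2 := by
      rw [div_eq_div_iff (pow_ne_zero 2 (sub_ne_zero.mpr hxy))
        (pow_ne_zero 2 (sub_ne_zero.mpr hzζ))]
      ring
    rw [show (1 - ((2 * L * z) + (2 * L * ζ)) / 2) = 1 - L * (z + ζ) by ring, e1]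
  rw [← hval]
  exact h.congr_fun hterm
end

section
/- For all integers κ ≥ 1 and ℓ ≥ 1, the following identity of rational numbers holds: ∑_{p=1}^{κ} ∑_{q=1}^{ℓ, with p ≡ q (mod 2)} 2^{κ+ℓ−p−q} · binom(κ,p) · binom(ℓ,q) · (4pq/(p+q)) · binom(p−1, ⌊p/2⌋) · binom(q−1, ⌊q/2⌋) = (4κℓ/(κ+ℓ)) · binom(2κ−1, κ) · binom(2ℓ−1, ℓ). -/
noncomputable def chz (n : ℕ) (k : ℤ) : ℚ := if 0 ≤ k then (n.choose k.toNat : ℚ) else 0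

lemma chz_neg {n : ℕ} {k : ℤ} (h : k < 0) : chz n k = 0 := by
  simp [chz, not_le.mpr h]

lemma chz_natCast (n k : ℕ) : chz n (k : ℤ) = (n.choose k : ℚ) := by
  simp [chz]

lemma chz_zero_left (k : ℤ) : chz 0 k = if k = 0 then 1 else 0 := by
  rcases lt_trichotomy k 0 with h | h | h
  · simp [chz_neg h, h.ne]
  · simp [h, chz]
  · have : k.toNat ≠ 0 := by omega
    simp [chz, h.le, h.ne', Nat.choose_eq_zero_of_lt (by omega : 0 < k.toNat)]

lemma chz_succ (m : ℕ) (k : ℤ) : chz (m+1) k = chz m k + chz m (k-1) := by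
  rcases lt_trichotomy k 0 with h | h | h
  · rw [chz_neg h, chz_neg h, chz_neg (by omega)]; ring
  · subst h; simp [chz, chz_neg (by norm_num : (0:ℤ)-1 < 0)]
  · have hk : k = ((k.toNat - 1 : ℕ) : ℤ) + 1 := by omega
    rw [hk]
    rw [show ((k.toNat - 1 : ℕ) : ℤ) + 1 = (((k.toNat - 1) + 1 : ℕ) : ℤ) by push_cast; ring]
    rw [chz_natCast, show (((k.toNat - 1) + 1 : ℕ) : ℤ) - 1 = ((k.toNat - 1 : ℕ) : ℤ) by push_cast; ring, chz_natCast, chz_natCast, Nat.choose_succ_succ]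
    push_cast; ring

lemma choose_mul_A (m t : ℕ) : ((m:ℚ)+1) * (m.choose t : ℚ) = ((m+1).choose (t+1) : ℚ) * ((t:ℚ)+1) := by
  exact_mod_cast congrArg (Nat.cast (R := ℚ)) (Nat.add_one_mul_choose_eq m t)

lemma choose_mul_B (m t : ℕ) : ((m:ℚ)+1) * (m.choose (t+1) : ℚ) = ((m+1).choose (t+1) : ℚ) * ((m:ℚ) - t) := by
  rcases le_or_gt (t+1) m with h | h
  · have h1 : (m+1) * m.choose (t+1) = (m+1).choose (t+1) * (m - t) := by
      have e1 : m.choose (m - (t+1)) = m.choose (t+1) := Nat.choose_symm h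
      have e2 := Nat.add_one_mul_choose_eq m (m - (t+1))
      have e3 : m - (t+1) + 1 = m - t := by omega
      rw [e3] at e2
      have e4 : (m+1).choose (m - t) = (m+1).choose (t+1) := by
        have := Nat.choose_symm (show t+1 ≤ m+1 by omega)
        rwa [show m + 1 - (t+1) = m - t by omega] at this
      rw [← e1, e2, e4]
    have := congrArg (Nat.cast (R := ℚ)) h1
    push_cast [Nat.cast_sub (show t ≤ m by omega)] at this
    linarith [this]
  · rcases Nat.lt_or_ge m (t+1) with _ | _
    · rcases eq_or_lt_of_le (show m ≤ t by omega) with he | hl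
      · subst he
        simp [Nat.choose_eq_zero_of_lt (show m < m+1 by omega)]
      · rw [Nat.choose_eq_zero_of_lt (show m < t+1 by omega),
            Nat.choose_eq_zero_of_lt (show m+1 < t+1 by omega)]
        simp
    · omega

lemma lemJ (m : ℕ) (j : ℤ) (hj : 0 ≤ j) (hpar : ((m:ℤ)+1) % 2 = j % 2) :
    (j:ℚ) * chz (m+1) ((((m:ℤ)+1) - j)/2)
      = ((m:ℚ)+1) * (chz m ((((m:ℤ)+1) - j)/2) - chz m ((((m:ℤ)+1) - j)/2 - 1)) := by
  set k : ℤ := (((m:ℤ)+1) - j)/2 with hk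
  have hkk : ((m:ℤ)+1) - j = 2 * k := by omega
  rcases lt_trichotomy k 0 with h | h | h
  · rw [chz_neg h, chz_neg h, chz_neg (by omega)]; ring
  · have hj' : j = (m:ℤ) + 1 := by omega
    subst hj'
    rw [h]
    simp only [chz, chz_neg (show (0:ℤ) - 1 < 0 by norm_num)]
    norm_num
  · -- k = s+1 ≥ 1
    have hs : k = ((k.toNat - 1 : ℕ) : ℤ) + 1 := by omega
    set t : ℕ := k.toNat - 1 with ht
    have hq : (j:ℚ) = ((m:ℚ)+1) - 2*((t:ℚ)+1) := by
      have : (j:ℤ) = ((m:ℤ)+1) - 2*(((t:ℕ):ℤ)+1) := by omega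
      exact_mod_cast congrArg (Int.cast (R := ℚ)) this
    rw [hs, show ((t:ℤ)+1) - 1 = ((t:ℕ):ℤ) by ring]
    rw [show ((t:ℤ)+1) = (((t+1 : ℕ)):ℤ) by push_cast; ring]
    rw [chz_natCast, chz_natCast, chz_natCast, hq]
    have hA := choose_mul_A m t
    have hB := choose_mul_B m t
    linear_combination hA - hB

lemma tele1 (F : ℕ → ℚ) (N : ℕ) (hN : 1 ≤ N) :
    ∑ j ∈ Finset.Icc 1 N, (F j - F (j+1)) = F 1 - F (N+1) := by
  induction N with
  | zero => omega
  | succ n ih =>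
    rcases Nat.lt_or_ge 1 (n+1) with h | h
    · rw [Finset.sum_Icc_succ_top (by omega : 1 ≤ n+1), ih (by omega)]; ring
    · have hn : n = 0 := by omega
      subst hn; simp
lemma tele2 (F : ℕ → ℚ) (r N : ℕ) (hr : r < 2) (hN : 2 ≤ N) :
    ∑ j ∈ Finset.Icc 1 N, (if j % 2 = r then F j - F (j+2) else 0)
      = (if 1 % 2 = r then F 1 else F 2) - (if (N+1) % 2 = r then F (N+1) else F (N+2)) := by
  induction N with
  | zero => omega
  | succ n ih =>
    rcases Nat.lt_or_ge 2 (n+1) with h | h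
    · rw [Finset.sum_Icc_succ_top (by omega : 1 ≤ n+1), ih (by omega)]
      by_cases hc : (n+1) % 2 = r
      · rw [if_pos hc, if_pos hc, if_neg (show ¬ ((n+1+1) % 2 = r) by omega)]
        ring
      · rw [if_neg hc, if_neg hc, if_pos (show (n+1+1) % 2 = r by omega)]
        ring
    · have hn : n = 1 := by omega
      subst hn
      have : Finset.Icc 1 2 = {1, 2} := rfl
      rw [this, Finset.sum_pair (by omega : (1:ℕ) ≠ 2)]
      interval_cases r <;> norm_num
lemma lemB (κ : ℕ) (j : ℤ) :
    ∑ p ∈ Finset.range (κ+1),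
      (if (p:ℤ) % 2 = j % 2 then (2:ℚ)^(κ-p) * (κ.choose p : ℚ) * chz p (((p:ℤ) - j)/2) else 0)
      = chz (2*κ) ((κ:ℤ) - j) := by
  induction κ generalizing j with
  | zero =>
    rw [Finset.sum_range_one]
    simp only [Nat.choose_self, Nat.cast_one, pow_zero, Nat.zero_sub, Nat.cast_zero, mul_zero,
      zero_sub]
    rw [chz_zero_left, chz_zero_left]
    by_cases hc : (0:ℤ) % 2 = j % 2
    · rw [if_pos hc]
      by_cases hj : j = 0
      · subst hj; norm_num
      · rw [if_neg (show ¬ (-j/2 = 0) by omega), if_neg (show ¬ (-j = 0) by omega)]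
        ring
    · rw [if_neg hc, if_neg (show ¬ (-j = 0) by omega)]
  | succ κ ih =>
    -- abbreviations
    have key : ∀ p ∈ Finset.range (κ+1),
        (if ((p:ℤ)+1) % 2 = j % 2 then
            (2:ℚ)^(κ-p) * ((κ+1).choose (p+1) : ℚ) * chz (p+1) ((((p:ℤ)+1) - j)/2) else 0)
        = (if ((p:ℤ)+1) % 2 = j % 2 then
            (2:ℚ)^(κ-p) * (κ.choose (p+1) : ℚ) * chz (p+1) ((((p:ℤ)+1) - j)/2) else 0)
          + (if (p:ℤ) % 2 = (j-1) % 2 then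
            (2:ℚ)^(κ-p) * (κ.choose p : ℚ) * chz p (((p:ℤ) - (j-1))/2) else 0)
          + (if (p:ℤ) % 2 = (j+1) % 2 then
            (2:ℚ)^(κ-p) * (κ.choose p : ℚ) * chz p (((p:ℤ) - (j+1))/2) else 0) := by
      intro p _
      by_cases hc : ((p:ℤ)+1) % 2 = j % 2
      · rw [if_pos hc, if_pos hc, if_pos (by omega), if_pos (by omega)]
        rw [Nat.choose_succ_succ, chz_succ p ((((p:ℤ)+1) - j)/2)]
        rw [show (((p:ℤ)+1) - j)/2 - 1 = ((p:ℤ) - (j+1))/2 by omega,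
            show (((p:ℤ)+1) - j)/2 = ((p:ℤ) - (j-1))/2 by omega]
        push_cast
        ring
      · rw [if_neg hc, if_neg hc, if_neg (by omega), if_neg (by omega)]
        norm_num
    -- the sum over range (κ+2), peel off p = 0
    rw [Finset.sum_range_succ']
    -- identify shifted terms with key's LHS
    have hshift : ∀ p ∈ Finset.range (κ+1),
        (if ((p+1 : ℕ):ℤ) % 2 = j % 2 then
            (2:ℚ)^(κ+1-(p+1)) * ((κ+1).choose (p+1) : ℚ) * chz (p+1) ((((p+1:ℕ):ℤ) - j)/2) else 0)
        = (if ((p:ℤ)+1) % 2 = j % 2 then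
            (2:ℚ)^(κ-p) * ((κ+1).choose (p+1) : ℚ) * chz (p+1) ((((p:ℤ)+1) - j)/2) else 0) := by
      intro p _
      have e1 : ((p+1 : ℕ):ℤ) = (p:ℤ)+1 := by push_cast; ring
      have e2 : κ+1-(p+1) = κ-p := by omega
      rw [e1, e2]
    rw [Finset.sum_congr rfl hshift, Finset.sum_congr rfl key]
    have split : ∀ a b c : ℕ → ℚ, ∀ s : Finset ℕ,
        (∑ p ∈ s, (a p + b p + c p)) = (∑ p ∈ s, a p) + (∑ p ∈ s, b p) + (∑ p ∈ s, c p) := by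
      intro a b c s; rw [Finset.sum_add_distrib, Finset.sum_add_distrib]
    rw [split]
    -- middle and right sums are ih (j-1), ih (j+1)
    rw [ih (j-1), ih (j+1)]
    -- left sum: 2 * ih j minus the p = 0 term
    have h2 : (∑ p ∈ Finset.range (κ+2),
        (if (p:ℤ) % 2 = j % 2 then (2:ℚ)^(κ+1-p) * (κ.choose p : ℚ) * chz p (((p:ℤ) - j)/2) else 0))
        = 2 * chz (2*κ) ((κ:ℤ) - j) := by
      rw [Finset.sum_range_succ]
      have hlast : (if ((κ+1:ℕ):ℤ) % 2 = j % 2 then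
          (2:ℚ)^(κ+1-(κ+1)) * (κ.choose (κ+1) : ℚ) * chz (κ+1) ((((κ+1:ℕ):ℤ) - j)/2) else 0) = 0 := by
        rw [Nat.choose_succ_self]
        split_ifs <;> norm_num
      rw [hlast, add_zero]
      have hdbl : ∀ p ∈ Finset.range (κ+1),
          (if (p:ℤ) % 2 = j % 2 then (2:ℚ)^(κ+1-p) * (κ.choose p : ℚ) * chz p (((p:ℤ) - j)/2) else 0)
          = 2 * (if (p:ℤ) % 2 = j % 2 then (2:ℚ)^(κ-p) * (κ.choose p : ℚ) * chz p (((p:ℤ) - j)/2) else 0) := by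
        intro p hp
        have hple : p ≤ κ := by simpa [Finset.mem_range, Nat.lt_succ_iff] using hp
        have e : κ+1-p = (κ-p)+1 := by omega
        rw [e, pow_succ]
        split_ifs <;> ring
      rw [Finset.sum_congr rfl hdbl, ← Finset.mul_sum, ih j]
    rw [Finset.sum_range_succ'] at h2
    have hfirst : (∑ p ∈ Finset.range (κ+1),
        (if ((p+1:ℕ):ℤ) % 2 = j % 2 then (2:ℚ)^(κ+1-(p+1)) * (κ.choose (p+1) : ℚ) * chz (p+1) ((((p+1:ℕ):ℤ) - j)/2) else 0))
        = (∑ p ∈ Finset.range (κ+1),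
        (if ((p:ℤ)+1) % 2 = j % 2 then (2:ℚ)^(κ-p) * (κ.choose (p+1) : ℚ) * chz (p+1) ((((p:ℤ)+1) - j)/2) else 0)) := by
      apply Finset.sum_congr rfl
      intro p _
      have e1 : ((p+1 : ℕ):ℤ) = (p:ℤ)+1 := by push_cast; ring
      have e2 : κ+1-(p+1) = κ-p := by omega
      rw [e1, e2]
    rw [hfirst] at h2
    -- now substitute
    have hz : ((0:ℕ):ℤ) = (0:ℤ) := rfl
    rw [show (∑ p ∈ Finset.range (κ+1),
        (if ((p:ℤ)+1) % 2 = j % 2 then (2:ℚ)^(κ-p) * (κ.choose (p+1) : ℚ) * chz (p+1) ((((p:ℤ)+1) - j)/2) else 0))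
        = 2 * chz (2*κ) ((κ:ℤ) - j) - (if ((0:ℕ):ℤ) % 2 = j % 2 then
            (2:ℚ)^(κ+1-0) * (κ.choose 0 : ℚ) * chz 0 ((((0:ℕ):ℤ) - j)/2) else 0) by linarith [h2]]
    -- the p = 0 leftover terms are equal
    have hzero : (if ((0:ℕ):ℤ) % 2 = j % 2 then
            (2:ℚ)^(κ+1-0) * ((κ+1).choose 0 : ℚ) * chz 0 ((((0:ℕ):ℤ) - j)/2) else 0)
        = (if ((0:ℕ):ℤ) % 2 = j % 2 then
            (2:ℚ)^(κ+1-0) * (κ.choose 0 : ℚ) * chz 0 ((((0:ℕ):ℤ) - j)/2) else 0) := by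
      simp
    rw [hzero]
    -- finally the Pascal recurrence on the closed form
    have hK : (((κ+1:ℕ)):ℤ) - j = ((κ:ℤ) - j) + 1 := by push_cast; ring
    have h2κ : 2*(κ+1) = (2*κ+1)+1 := by ring
    rw [h2κ, hK, chz_succ, chz_succ, chz_succ]
    rw [show (κ:ℤ) - j + 1 - 1 = (κ:ℤ) - j by ring,
        show (κ:ℤ) - j - 1 = (κ:ℤ) - (j+1) by ring,
        show (κ:ℤ) - j + 1 = (κ:ℤ) - (j-1) by ring]
    ring
lemma core1 (a b j : ℕ) (hpj : j % 2 = (a+1) % 2) (hpq : (a+1) % 2 = (b+1) % 2) :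
    (((a+1:ℕ):ℚ)+((b+1:ℕ):ℚ)) * (2*(j:ℚ) * chz (a+1) ((((a+1:ℕ):ℤ)-(j:ℤ))/2) * chz (b+1) ((((b+1:ℕ):ℤ)-(j:ℤ))/2))
    = 4*((a+1:ℕ):ℚ)*((b+1:ℕ):ℚ) *
        ( chz a ((((a+1:ℕ):ℤ)-(j:ℤ))/2) * chz b ((((b+1:ℕ):ℤ)-(j:ℤ))/2)
        - chz a ((((a+1:ℕ):ℤ)-((j+2:ℕ):ℤ))/2) * chz b ((((b+1:ℕ):ℤ)-((j+2:ℕ):ℤ))/2) ) := by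
  have e1 : (((a+1:ℕ):ℤ)-((j+2:ℕ):ℤ))/2 = (((a:ℤ)+1)-(j:ℤ))/2 - 1 := by push_cast; omega
  have e2 : (((b+1:ℕ):ℤ)-((j+2:ℕ):ℤ))/2 = (((b:ℤ)+1)-(j:ℤ))/2 - 1 := by push_cast; omega
  have e3 : (((a+1:ℕ):ℤ)-(j:ℤ)) = ((a:ℤ)+1)-(j:ℤ) := by push_cast; ring
  have e4 : (((b+1:ℕ):ℤ)-(j:ℤ)) = ((b:ℤ)+1)-(j:ℤ) := by push_cast; ring
  rw [e1, e2, e3, e4]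
  have Jp := lemJ a (j:ℤ) (by positivity) (by omega)
  have Jq := lemJ b (j:ℤ) (by positivity) (by omega)
  have Pp := chz_succ a ((((a:ℤ)+1)-(j:ℤ))/2)
  have Pq := chz_succ b ((((b:ℤ)+1)-(j:ℤ))/2)
  push_cast
  set A := chz a ((((a:ℤ)+1)-(j:ℤ))/2)
  set A' := chz a ((((a:ℤ)+1)-(j:ℤ))/2 - 1)
  set B := chz b ((((b:ℤ)+1)-(j:ℤ))/2)
  set B' := chz b ((((b:ℤ)+1)-(j:ℤ))/2 - 1)
  set cp := chz (a+1) ((((a:ℤ)+1)-(j:ℤ))/2)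
  set cq := chz (b+1) ((((b:ℤ)+1)-(j:ℤ))/2)
  linear_combination (2*((b:ℚ)+1)*cq)*Jp + (2*((a:ℚ)+1)*cp)*Jq
    + (2*((a:ℚ)+1)*((b:ℚ)+1)*(B-B'))*Pp + (2*((a:ℚ)+1)*((b:ℚ)+1)*(A-A'))*Pq

lemma step1 (p q N : ℕ) (hp : 1 ≤ p) (hq : 1 ≤ q) (hpar : p % 2 = q % 2) (hN : p + 1 ≤ N) :
    4*(p:ℚ)*(q:ℚ)/((p:ℚ)+(q:ℚ)) * (((p-1).choose (p/2) : ℕ) : ℚ) * (((q-1).choose (q/2) : ℕ) : ℚ)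
    = ∑ j ∈ Finset.Icc 1 N, (if j % 2 = p % 2 then
        2*(j:ℚ) * chz p (((p:ℤ)-(j:ℤ))/2) * chz q (((q:ℤ)-(j:ℤ))/2) else 0) := by
  have hpq0 : ((p:ℚ)+(q:ℚ)) ≠ 0 := by positivity
  rw [div_mul_eq_mul_div, div_mul_eq_mul_div, eq_comm, eq_div_iff hpq0]
  obtain ⟨a, rfl⟩ : ∃ a, p = a + 1 := ⟨p - 1, by omega⟩
  obtain ⟨b, rfl⟩ : ∃ b, q = b + 1 := ⟨q - 1, by omega⟩
  rw [Finset.sum_mul]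
  have hterm : ∀ j ∈ Finset.Icc 1 N,
      (if j % 2 = (a+1) % 2 then
        2*(j:ℚ) * chz (a+1) ((((a+1:ℕ):ℤ)-(j:ℤ))/2) * chz (b+1) ((((b+1:ℕ):ℤ)-(j:ℤ))/2) else 0)
        * (((a+1:ℕ):ℚ)+((b+1:ℕ):ℚ))
      = 4*((a+1:ℕ):ℚ)*((b+1:ℕ):ℚ) * (if j % 2 = (a+1) % 2 then
          (chz a ((((a+1:ℕ):ℤ)-(j:ℤ))/2) * chz b ((((b+1:ℕ):ℤ)-(j:ℤ))/2)
          - chz a ((((a+1:ℕ):ℤ)-((j+2:ℕ):ℤ))/2) * chz b ((((b+1:ℕ):ℤ)-((j+2:ℕ):ℤ))/2)) else 0) := by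
    intro j _
    by_cases hc : j % 2 = (a+1) % 2
    · rw [if_pos hc, if_pos hc, mul_comm]
      exact core1 a b j hc hpar
    · rw [if_neg hc, if_neg hc]; ring
  rw [Finset.sum_congr rfl hterm, ← Finset.mul_sum]
  have htele := tele2 (fun j => chz a ((((a+1:ℕ):ℤ)-(j:ℤ))/2) * chz b ((((b+1:ℕ):ℤ)-(j:ℤ))/2))
      ((a+1) % 2) N (Nat.mod_lt _ (by norm_num)) (by omega)
  rw [htele]
  have hFz : ∀ jj : ℕ, a + 1 < jj →
      chz a ((((a+1:ℕ):ℤ)-(jj:ℤ))/2) * chz b ((((b+1:ℕ):ℤ)-(jj:ℤ))/2) = 0 := by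
    intro jj hjj
    rw [chz_neg (show (((a+1:ℕ):ℤ)-(jj:ℤ))/2 < 0 by push_cast; omega), zero_mul]
  have htail : (if (N+1) % 2 = (a+1) % 2 then
      chz a ((((a+1:ℕ):ℤ)-((N+1:ℕ):ℤ))/2) * chz b ((((b+1:ℕ):ℤ)-((N+1:ℕ):ℤ))/2)
      else chz a ((((a+1:ℕ):ℤ)-((N+2:ℕ):ℤ))/2) * chz b ((((b+1:ℕ):ℤ)-((N+2:ℕ):ℤ))/2)) = 0 := by
    split_ifs
    · exact hFz (N+1) (by omega)
    · exact hFz (N+2) (by omega)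
  rw [htail]
  have hhead : (if 1 % 2 = (a+1) % 2 then
      chz a ((((a+1:ℕ):ℤ)-((1:ℕ):ℤ))/2) * chz b ((((b+1:ℕ):ℤ)-((1:ℕ):ℤ))/2)
      else chz a ((((a+1:ℕ):ℤ)-((2:ℕ):ℤ))/2) * chz b ((((b+1:ℕ):ℤ)-((2:ℕ):ℤ))/2))
      = (((a+1-1).choose ((a+1)/2) : ℕ) : ℚ) * (((b+1-1).choose ((b+1)/2) : ℕ) : ℚ) := by
    rcases Nat.mod_two_eq_zero_or_one (a+1) with hpar2 | hpar2
    · rw [if_neg (by omega)]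
      have ea : (((a+1:ℕ):ℤ)-((2:ℕ):ℤ))/2 = (((a+1)/2 - 1 : ℕ) : ℤ) := by push_cast; omega
      have eb : (((b+1:ℕ):ℤ)-((2:ℕ):ℤ))/2 = (((b+1)/2 - 1 : ℕ) : ℤ) := by push_cast; omega
      rw [ea, eb, chz_natCast, chz_natCast]
      have sa : a.choose ((a+1)/2 - 1) = a.choose ((a+1)/2) := by
        have := Nat.choose_symm (show (a+1)/2 ≤ a by omega)
        rwa [show a - (a+1)/2 = (a+1)/2 - 1 by omega] at this
      have sb : b.choose ((b+1)/2 - 1) = b.choose ((b+1)/2) := by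
        have := Nat.choose_symm (show (b+1)/2 ≤ b by omega)
        rwa [show b - (b+1)/2 = (b+1)/2 - 1 by omega] at this
      simp only [Nat.add_sub_cancel]
      rw [sa, sb]
    · rw [if_pos (by omega)]
      have ea : (((a+1:ℕ):ℤ)-((1:ℕ):ℤ))/2 = (((a+1)/2 : ℕ) : ℤ) := by push_cast; omega
      have eb : (((b+1:ℕ):ℤ)-((1:ℕ):ℤ))/2 = (((b+1)/2 : ℕ) : ℤ) := by push_cast; omega
      rw [ea, eb, chz_natCast, chz_natCast]
      simp only [Nat.add_sub_cancel]
  rw [hhead]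
  push_cast
  ring
lemma core4 (a b j : ℕ) :
    (((a+1:ℕ):ℚ)+((b+1:ℕ):ℚ)) * (2*(j:ℚ) * chz (2*(a+1)) (((a+1:ℕ):ℤ)-(j:ℤ)) * chz (2*(b+1)) (((b+1:ℕ):ℤ)-(j:ℤ)))
    = 4*((a+1:ℕ):ℚ)*((b+1:ℕ):ℚ) *
        ( chz (2*(a+1)-1) (((a+1:ℕ):ℤ)-(j:ℤ)) * chz (2*(b+1)-1) (((b+1:ℕ):ℤ)-(j:ℤ))
        - chz (2*(a+1)-1) (((a+1:ℕ):ℤ)-((j+1:ℕ):ℤ)) * chz (2*(b+1)-1) (((b+1:ℕ):ℤ)-((j+1:ℕ):ℤ)) ) := by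
  have r1 : 2*(a+1) = (2*a+1)+1 := by ring
  have r2 : 2*(b+1) = (2*b+1)+1 := by ring
  have r3 : 2*(a+1)-1 = 2*a+1 := by omega
  have r4 : 2*(b+1)-1 = 2*b+1 := by omega
  rw [r3, r4, r1, r2]
  have e1 : (((a+1:ℕ):ℤ)-(j:ℤ)) = (((2*a+1:ℕ):ℤ)+1-(2*j:ℤ))/2 := by push_cast; omega
  have e2 : (((b+1:ℕ):ℤ)-(j:ℤ)) = (((2*b+1:ℕ):ℤ)+1-(2*j:ℤ))/2 := by push_cast; omega
  have e3 : (((a+1:ℕ):ℤ)-((j+1:ℕ):ℤ)) = (((2*a+1:ℕ):ℤ)+1-(2*j:ℤ))/2 - 1 := by push_cast; omega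
  have e4 : (((b+1:ℕ):ℤ)-((j+1:ℕ):ℤ)) = (((2*b+1:ℕ):ℤ)+1-(2*j:ℤ))/2 - 1 := by push_cast; omega
  rw [e1, e2, e3, e4]
  have Jp := lemJ (2*a+1) ((2*j:ℤ)) (by positivity) (by push_cast; omega)
  have Jq := lemJ (2*b+1) ((2*j:ℤ)) (by positivity) (by push_cast; omega)
  have Pp := chz_succ (2*a+1) ((((2*a+1:ℕ):ℤ)+1-(2*j:ℤ))/2)
  have Pq := chz_succ (2*b+1) ((((2*b+1:ℕ):ℤ)+1-(2*j:ℤ))/2)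
  set A := chz (2*a+1) ((((2*a+1:ℕ):ℤ)+1-(2*j:ℤ))/2)
  set A' := chz (2*a+1) ((((2*a+1:ℕ):ℤ)+1-(2*j:ℤ))/2 - 1)
  set B := chz (2*b+1) ((((2*b+1:ℕ):ℤ)+1-(2*j:ℤ))/2)
  set B' := chz (2*b+1) ((((2*b+1:ℕ):ℤ)+1-(2*j:ℤ))/2 - 1)
  set cp := chz ((2*a+1)+1) ((((2*a+1:ℕ):ℤ)+1-(2*j:ℤ))/2)
  set cq := chz ((2*b+1)+1) ((((2*b+1:ℕ):ℤ)+1-(2*j:ℤ))/2)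
  push_cast at Jp Jq ⊢
  linear_combination ((b:ℚ)+1)*cq*Jp + ((a:ℚ)+1)*cp*Jq
    + ((2*(a:ℚ)+2)*((b:ℚ)+1)*(B-B'))*Pp + ((2*(a:ℚ)+2)*((b:ℚ)+1)*(A-A'))*Pq

lemma step4 (κ ℓ N : ℕ) (hκ : 1 ≤ κ) (hℓ : 1 ≤ ℓ) (hN : κ + 1 ≤ N) :
    ∑ j ∈ Finset.Icc 1 N, 2*(j:ℚ) * chz (2*κ) (((κ:ℕ):ℤ)-(j:ℤ)) * chz (2*ℓ) (((ℓ:ℕ):ℤ)-(j:ℤ))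
    = 4*(κ:ℚ)*(ℓ:ℚ)/((κ:ℚ)+(ℓ:ℚ)) * (((2*κ-1).choose κ : ℕ) : ℚ) * (((2*ℓ-1).choose ℓ : ℕ) : ℚ) := by
  have hpq0 : ((κ:ℚ)+(ℓ:ℚ)) ≠ 0 := by positivity
  rw [div_mul_eq_mul_div, div_mul_eq_mul_div, eq_div_iff hpq0]
  obtain ⟨a, rfl⟩ : ∃ a, κ = a + 1 := ⟨κ - 1, by omega⟩
  obtain ⟨b, rfl⟩ : ∃ b, ℓ = b + 1 := ⟨ℓ - 1, by omega⟩
  rw [Finset.sum_mul]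
  have hterm : ∀ j ∈ Finset.Icc 1 N,
      (2*(j:ℚ) * chz (2*(a+1)) (((a+1:ℕ):ℤ)-(j:ℤ)) * chz (2*(b+1)) (((b+1:ℕ):ℤ)-(j:ℤ)))
        * (((a+1:ℕ):ℚ)+((b+1:ℕ):ℚ))
      = 4*((a+1:ℕ):ℚ)*((b+1:ℕ):ℚ) *
          ( chz (2*(a+1)-1) (((a+1:ℕ):ℤ)-(j:ℤ)) * chz (2*(b+1)-1) (((b+1:ℕ):ℤ)-(j:ℤ))
          - chz (2*(a+1)-1) (((a+1:ℕ):ℤ)-((j+1:ℕ):ℤ)) * chz (2*(b+1)-1) (((b+1:ℕ):ℤ)-((j+1:ℕ):ℤ)) ) := by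
    intro j _
    rw [mul_comm]
    exact core4 a b j
  rw [Finset.sum_congr rfl hterm, ← Finset.mul_sum]
  have htele := tele1 (fun j => chz (2*(a+1)-1) (((a+1:ℕ):ℤ)-(j:ℤ)) * chz (2*(b+1)-1) (((b+1:ℕ):ℤ)-(j:ℤ))) N (by omega)
  rw [htele]
  have htail : chz (2*(a+1)-1) (((a+1:ℕ):ℤ)-((N+1:ℕ):ℤ)) * chz (2*(b+1)-1) (((b+1:ℕ):ℤ)-((N+1:ℕ):ℤ)) = 0 := by
    rw [chz_neg (show (((a+1:ℕ):ℤ)-((N+1:ℕ):ℤ)) < 0 by push_cast; omega), zero_mul]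
  rw [htail]
  have ea : (((a+1:ℕ):ℤ)-((1:ℕ):ℤ)) = ((a:ℕ):ℤ) := by push_cast; ring
  have eb : (((b+1:ℕ):ℤ)-((1:ℕ):ℤ)) = ((b:ℕ):ℤ) := by push_cast; ring
  rw [ea, eb, chz_natCast, chz_natCast]
  have sa : (2*(a+1)-1).choose a = (2*(a+1)-1).choose (a+1) := by
    have := Nat.choose_symm (show a+1 ≤ 2*(a+1)-1 by omega)
    rwa [show 2*(a+1)-1 - (a+1) = a by omega] at this
  have sb : (2*(b+1)-1).choose b = (2*(b+1)-1).choose (b+1) := by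
    have := Nat.choose_symm (show b+1 ≤ 2*(b+1)-1 by omega)
    rwa [show 2*(b+1)-1 - (b+1) = b by omega] at this
  rw [sa, sb]
  push_cast
  ring

/-- At `c = 1`, the double-sum formula for the limiting covariances of power traces of the
β-Wishart ensemble equals the closed-form covariances of an ensemble supported on `[0, 4]`:
`∑_{p=1}^{κ} ∑_{q=1,p≡q(2)}^{ℓ} 2^{κ+ℓ−p−q} C(κ,p) C(ℓ,q) (4pq/(p+q)) C(p−1,⌊p/2⌋) C(q−1,⌊q/2⌋)
= (4κℓ/(κ+ℓ)) C(2κ−1,κ) C(2ℓ−1,ℓ)`. -/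
theorem wishart_c_one_identity (κ ℓ : ℕ) (hκ : 1 ≤ κ) (hℓ : 1 ≤ ℓ) :
    (∑ p ∈ Finset.Icc 1 κ, ∑ q ∈ Finset.Icc 1 ℓ,
      if p % 2 = q % 2 then
        (2 : ℚ) ^ (κ + ℓ - p - q) * (Nat.choose κ p : ℚ) * (Nat.choose ℓ q : ℚ) *
          (4 * (p : ℚ) * (q : ℚ) / ((p : ℚ) + (q : ℚ))) *
          (Nat.choose (p - 1) (p / 2) : ℚ) * (Nat.choose (q - 1) (q / 2) : ℚ)
      else 0) =
    (4 * (κ : ℚ) * (ℓ : ℚ) / ((κ : ℚ) + (ℓ : ℚ))) *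
      (Nat.choose (2 * κ - 1) κ : ℚ) * (Nat.choose (2 * ℓ - 1) ℓ : ℚ) := by
  have h1 : ∀ p ∈ Finset.Icc 1 κ, ∀ q ∈ Finset.Icc 1 ℓ,
      (if p % 2 = q % 2 then
        (2 : ℚ) ^ (κ + ℓ - p - q) * (Nat.choose κ p : ℚ) * (Nat.choose ℓ q : ℚ) *
          (4 * (p : ℚ) * (q : ℚ) / ((p : ℚ) + (q : ℚ))) *
          (Nat.choose (p - 1) (p / 2) : ℚ) * (Nat.choose (q - 1) (q / 2) : ℚ)
      else 0)
      = ∑ j ∈ Finset.Icc 1 (κ+ℓ), 2*(j:ℚ)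
          * (if j % 2 = p % 2 then (2:ℚ)^(κ-p) * (κ.choose p : ℚ) * chz p (((p:ℤ)-(j:ℤ))/2) else 0)
          * (if j % 2 = q % 2 then (2:ℚ)^(ℓ-q) * (ℓ.choose q : ℚ) * chz q (((q:ℤ)-(j:ℤ))/2) else 0) := by
    intro p hp q hq
    rw [Finset.mem_Icc] at hp hq
    by_cases hc : p % 2 = q % 2
    · rw [if_pos hc]
      have hsplit : (2 : ℚ) ^ (κ + ℓ - p - q) = 2^(κ-p) * 2^(ℓ-q) := by
        rw [show κ + ℓ - p - q = (κ-p) + (ℓ-q) by omega, pow_add]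
      rw [hsplit]
      rw [show (2:ℚ)^(κ-p) * 2^(ℓ-q) * (κ.choose p : ℚ) * (ℓ.choose q : ℚ) *
          (4 * (p : ℚ) * (q : ℚ) / ((p : ℚ) + (q : ℚ))) *
          ((p - 1).choose (p / 2) : ℚ) * ((q - 1).choose (q / 2) : ℚ)
        = ((2:ℚ)^(κ-p) * (κ.choose p : ℚ) * (2^(ℓ-q) * (ℓ.choose q : ℚ))) *
          (4 * (p:ℚ) * (q:ℚ) / ((p:ℚ)+(q:ℚ)) * (((p-1).choose (p/2) : ℕ) : ℚ) *
            (((q-1).choose (q/2) : ℕ) : ℚ)) by ring]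
      rw [step1 p q (κ+ℓ) hp.1 hq.1 hc (by omega), Finset.mul_sum]
      apply Finset.sum_congr rfl
      intro j _
      by_cases hcj : j % 2 = p % 2
      · rw [if_pos hcj, if_pos hcj, if_pos (by omega : j % 2 = q % 2)]
        ring
      · rw [if_neg hcj, if_neg hcj, mul_zero]
        ring
    · rw [if_neg hc, eq_comm]
      apply Finset.sum_eq_zero
      intro j _
      by_cases hcj : j % 2 = p % 2
      · rw [if_neg (by omega : ¬ (j % 2 = q % 2)), mul_zero]
      · rw [if_neg hcj, mul_zero, zero_mul]
  rw [Finset.sum_congr rfl (fun p hp => Finset.sum_congr rfl (h1 p hp))]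
  -- swap sums: p,(q,j) → p,(j,q) → j,(p,q)
  rw [Finset.sum_congr rfl (fun p _ => Finset.sum_comm)]
  rw [Finset.sum_comm]
  -- factor each j-term
  have h2 : ∀ j ∈ Finset.Icc 1 (κ+ℓ),
      (∑ p ∈ Finset.Icc 1 κ, ∑ q ∈ Finset.Icc 1 ℓ, 2*(j:ℚ)
          * (if j % 2 = p % 2 then (2:ℚ)^(κ-p) * (κ.choose p : ℚ) * chz p (((p:ℤ)-(j:ℤ))/2) else 0)
          * (if j % 2 = q % 2 then (2:ℚ)^(ℓ-q) * (ℓ.choose q : ℚ) * chz q (((q:ℤ)-(j:ℤ))/2) else 0))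
      = 2*(j:ℚ) * chz (2*κ) (((κ:ℕ):ℤ)-(j:ℤ)) * chz (2*ℓ) (((ℓ:ℕ):ℤ)-(j:ℤ)) := by
    intro j hj
    rw [Finset.mem_Icc] at hj
    have hU : (∑ p ∈ Finset.Icc 1 κ,
        (if j % 2 = p % 2 then (2:ℚ)^(κ-p) * (κ.choose p : ℚ) * chz p (((p:ℤ)-(j:ℤ))/2) else 0))
        = chz (2*κ) (((κ:ℕ):ℤ)-(j:ℤ)) := by
      have hB := lemB κ (j:ℤ)
      have hins : Finset.range (κ+1) = insert 0 (Finset.Icc 1 κ) := by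
        ext x; simp only [Finset.mem_range, Finset.mem_insert, Finset.mem_Icc]; omega
      rw [hins, Finset.sum_insert (by simp)] at hB
      have hzero : (if ((0:ℕ):ℤ) % 2 = (j:ℤ) % 2 then
          (2:ℚ)^(κ-0) * (κ.choose 0 : ℚ) * chz 0 ((((0:ℕ):ℤ) - (j:ℤ))/2) else 0) = 0 := by
        by_cases hcj : ((0:ℕ):ℤ) % 2 = (j:ℤ) % 2
        · rw [if_pos hcj, chz_zero_left, if_neg (by push_cast at hcj ⊢; omega)]
          ring
        · rw [if_neg hcj]
      rw [hzero, zero_add] at hB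
      rw [← hB]
      apply Finset.sum_congr rfl
      intro p _
      refine if_congr ?_ rfl rfl
      constructor <;> (intro h; omega)
    have hV : (∑ q ∈ Finset.Icc 1 ℓ,
        (if j % 2 = q % 2 then (2:ℚ)^(ℓ-q) * (ℓ.choose q : ℚ) * chz q (((q:ℤ)-(j:ℤ))/2) else 0))
        = chz (2*ℓ) (((ℓ:ℕ):ℤ)-(j:ℤ)) := by
      have hB := lemB ℓ (j:ℤ)
      have hins : Finset.range (ℓ+1) = insert 0 (Finset.Icc 1 ℓ) := by
        ext x; simp only [Finset.mem_range, Finset.mem_insert, Finset.mem_Icc]; omega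
      rw [hins, Finset.sum_insert (by simp)] at hB
      have hzero : (if ((0:ℕ):ℤ) % 2 = (j:ℤ) % 2 then
          (2:ℚ)^(ℓ-0) * (ℓ.choose 0 : ℚ) * chz 0 ((((0:ℕ):ℤ) - (j:ℤ))/2) else 0) = 0 := by
        by_cases hcj : ((0:ℕ):ℤ) % 2 = (j:ℤ) % 2
        · rw [if_pos hcj, chz_zero_left, if_neg (by push_cast at hcj ⊢; omega)]
          ring
        · rw [if_neg hcj]
      rw [hzero, zero_add] at hB
      rw [← hB]
      apply Finset.sum_congr rfl
      intro q _
      refine if_congr ?_ rfl rfl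
      constructor <;> (intro h; omega)
    calc (∑ p ∈ Finset.Icc 1 κ, ∑ q ∈ Finset.Icc 1 ℓ, 2*(j:ℚ)
          * (if j % 2 = p % 2 then (2:ℚ)^(κ-p) * (κ.choose p : ℚ) * chz p (((p:ℤ)-(j:ℤ))/2) else 0)
          * (if j % 2 = q % 2 then (2:ℚ)^(ℓ-q) * (ℓ.choose q : ℚ) * chz q (((q:ℤ)-(j:ℤ))/2) else 0))
        = 2*(j:ℚ) * (∑ p ∈ Finset.Icc 1 κ,
            (if j % 2 = p % 2 then (2:ℚ)^(κ-p) * (κ.choose p : ℚ) * chz p (((p:ℤ)-(j:ℤ))/2) else 0))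
          * (∑ q ∈ Finset.Icc 1 ℓ,
            (if j % 2 = q % 2 then (2:ℚ)^(ℓ-q) * (ℓ.choose q : ℚ) * chz q (((q:ℤ)-(j:ℤ))/2) else 0)) := by
          rw [Finset.mul_sum, Finset.sum_comm]
          apply Finset.sum_congr rfl
          intro q _
          rw [Finset.mul_sum, Finset.sum_mul]
      _ = 2*(j:ℚ) * chz (2*κ) (((κ:ℕ):ℤ)-(j:ℤ)) * chz (2*ℓ) (((ℓ:ℕ):ℤ)-(j:ℤ)) := by
          rw [hU, hV]
  rw [Finset.sum_congr rfl h2]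
  rw [step4 κ ℓ (κ+ℓ) hκ hℓ (by omega)]
end
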